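/- Let τ ↦ (x1(τ), x2(τ), z5(τ), z6(τ)) be a differentiable solution of the averaged ESC closed-loop system defined for all τ ≥ 0 with z5(0)² + z6(0)² = 1. If C1 c1 x1(τ) z5(τ) + C2 c2 x2(τ) z6(τ) = 0 for all τ ≥ 0, then x1(τ) = 0 and x2(τ) = 0 for all τ ≥ 0. -/

import Mathlib

open Real Filter

/-- The averaged ESC closed-loop system with positive constants `a, k1, k2, ω0, C1, C2, c1, c2`:
`x1' = −(a k1/ω0) z5 (C1 c1 x1 z5 + C2 c2 x2 z6)`,
`x2' = −(a k1/ω0) z6 (C1 c1 x1 z5 + C2 c2 x2 z6)`,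
`z5' = (a k2/ω0) z6 (C1 c1 x1 z6 − C2 c2 x2 z5)`,
`z6' = −(a k2/ω0) z5 (C1 c1 x1 z6 − C2 c2 x2 z5)`, holding for all `τ ∈ s`. -/
def AvgESC (a k1 k2 ω0 C1 C2 c1 c2 : ℝ) (x1 x2 z5 z6 : ℝ → ℝ) (s : Set ℝ) : Prop :=
  ∀ τ ∈ s,
    HasDerivAt x1
      (-(a * k1 / ω0) * z5 τ * (C1 * c1 * x1 τ * z5 τ + C2 * c2 * x2 τ * z6 τ)) τ ∧
    HasDerivAt x2
      (-(a * k1 / ω0) * z6 τ * (C1 * c1 * x1 τ * z5 τ + C2 * c2 * x2 τ * z6 τ)) τ ∧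
    HasDerivAt z5
      ((a * k2 / ω0) * z6 τ * (C1 * c1 * x1 τ * z6 τ - C2 * c2 * x2 τ * z5 τ)) τ ∧
    HasDerivAt z6
      (-(a * k2 / ω0) * z5 τ * (C1 * c1 * x1 τ * z6 τ - C2 * c2 * x2 τ * z5 τ)) τ

/-- If a solution of the averaged ESC closed-loop system on `[0,∞)` starts on
the unit circle in `(z5, z6)` and satisfies `C1 c1 x1 z5 + C2 c2 x2 z6 = 0` for all `τ ≥ 0`,
then `x1(τ) = 0` and `x2(τ) = 0` for all `τ ≥ 0`. -/
theorem stmt16 (a k1 k2 ω0 C1 C2 c1 c2 : ℝ)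
    (ha : 0 < a) (hk1 : 0 < k1) (hk2 : 0 < k2) (hω0 : 0 < ω0)
    (hC1 : 0 < C1) (hC2 : 0 < C2) (hc1 : 0 < c1) (hc2 : 0 < c2)
    (x1 x2 z5 z6 : ℝ → ℝ)
    (hsol : AvgESC a k1 k2 ω0 C1 C2 c1 c2 x1 x2 z5 z6 (Set.Ici 0))
    (hinit : z5 0 ^ 2 + z6 0 ^ 2 = 1)
    (hM : ∀ τ ≥ (0 : ℝ), C1 * c1 * x1 τ * z5 τ + C2 * c2 * x2 τ * z6 τ = 0) :
    ∀ τ ≥ (0 : ℝ), x1 τ = 0 ∧ x2 τ = 0 := by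
  intro τ hτ
  -- N(t) = z5 t ^2 + z6 t^2 is constant (= 1) on [0, ∞)
  have hNderiv : ∀ t ∈ Set.Ici (0:ℝ), HasDerivAt (fun u => z5 u ^ 2 + z6 u ^ 2) 0 t := by
    intro t ht
    obtain ⟨_, _, h5, h6⟩ := hsol t ht
    have h := (h5.pow 2).add (h6.pow 2)
    refine h.congr_deriv ?_
    ring
  have hNτ : z5 τ ^ 2 + z6 τ ^ 2 = 1 := by
    have hcont : ContinuousOn (fun u => z5 u ^ 2 + z6 u ^ 2) (Set.Icc 0 τ) := by
      intro t ht
      exact ((hNderiv t ht.1).continuousAt).continuousWithinAt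
    have hder : ∀ t ∈ Set.Ico (0:ℝ) τ,
        HasDerivWithinAt (fun u => z5 u ^ 2 + z6 u ^ 2) 0 (Set.Ici t) t := by
      intro t ht
      exact (hNderiv t ht.1).hasDerivWithinAt
    have := constant_of_has_deriv_right_zero hcont hder τ ⟨hτ, le_rfl⟩
    rw [this]
    exact hinit
  -- derivative of M at τ
  obtain ⟨h1, h2, h5, h6⟩ := hsol τ hτ
  have hd : HasDerivAt (fun u => C1 * c1 * x1 u * z5 u + C2 * c2 * x2 u * z6 u)
      ((a * k2 / ω0) * (C1 * c1 * x1 τ * z6 τ - C2 * c2 * x2 τ * z5 τ) ^ 2) τ := by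
    have h := (((h1.const_mul (C1 * c1)).mul h5)).add (((h2.const_mul (C2 * c2)).mul h6))
    refine h.congr_deriv ?_
    rw [show C1 * c1 * x1 τ * z5 τ + C2 * c2 * x2 τ * z6 τ = 0 from hM τ hτ]
    ring
  have hzero : HasDerivWithinAt (fun u => C1 * c1 * x1 u * z5 u + C2 * c2 * x2 u * z6 u)
      0 (Set.Ici τ) τ := by
    exact (hasDerivWithinAt_const τ _ (0:ℝ)).congr
      (fun u hu => hM u (le_trans hτ hu)) (hM τ hτ)
  have hE2 : (a * k2 / ω0) * (C1 * c1 * x1 τ * z6 τ - C2 * c2 * x2 τ * z5 τ) ^ 2 = 0 :=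
    (uniqueDiffOn_Ici τ τ Set.self_mem_Ici).eq_deriv _ hd.hasDerivWithinAt hzero
  have hcpos : 0 < a * k2 / ω0 := by positivity
  have hE0 : C1 * c1 * x1 τ * z6 τ - C2 * c2 * x2 τ * z5 τ = 0 := by
    have := (mul_eq_zero.mp hE2).resolve_left (ne_of_gt hcpos)
    exact pow_eq_zero_iff (n := 2) (by norm_num) |>.mp this
  have hA : C1 * c1 * x1 τ = 0 := by
    linear_combination z5 τ * hM τ hτ + z6 τ * hE0 - (C1 * c1 * x1 τ) * hNτ
  have hB : C2 * c2 * x2 τ = 0 := by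
    linear_combination z6 τ * hM τ hτ - z5 τ * hE0 - (C2 * c2 * x2 τ) * hNτ
  constructor
  · exact (mul_eq_zero.mp hA).resolve_left (ne_of_gt (mul_pos hC1 hc1))
  · exact (mul_eq_zero.mp hB).resolve_left (ne_of_gt (mul_pos hC2 hc2))
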